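/- Let s be a list of natural numbers of length n ≥ 1 with C(s) = 1. Then there exists exactly one k with 0 ≤ k < n such that the k-rotation of s is a well-formed expression. -/

import Mathlib

/-- `C v` is the length of `v` minus the sum of its entries. -/
def C (v : List ℕ) : ℤ := (v.length : ℤ) - (v.sum : ℤ)

/-- A list of natural numbers is a well-formed expression (Polish notation
encoding of an ordered rooted tree by outdegrees) if it is of the form
`d :: (w₁ ++ ⋯ ++ w_d)` where each `wᵢ` is a well-formed expression. -/
inductive IsWF : List ℕ → Prop
  | node (d : ℕ) (ws : List (List ℕ)) (hlen : ws.length = d)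
      (h : ∀ w ∈ ws, IsWF w) : IsWF (d :: ws.flatten)

/-- The `k`-rotation of `s = u ++ v` with `v` of length `k` is `v ++ u`. -/
def krot (k : ℕ) (s : List ℕ) : List ℕ :=
  s.drop (s.length - k) ++ s.take (s.length - k)

lemma C_nil : C ([] : List ℕ) = 0 := rfl

lemma C_append (a b : List ℕ) : C (a ++ b) = C a + C b := by
  simp [C]; ring

lemma C_cons (d : ℕ) (r : List ℕ) : C (d :: r) = 1 - d + C r := by
  simp [C]; ring

/-- `Good w` : total charge 1 and every proper prefix has charge ≤ 0. -/
def Good (w : List ℕ) : Prop := C w = 1 ∧ ∀ k < w.length, C (w.take k) ≤ 0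

lemma C_flatten (ws : List (List ℕ)) (h : ∀ w ∈ ws, C w = 1) :
    C ws.flatten = ws.length := by
  induction ws with
  | nil => simp [C_nil]
  | cons w t ih =>
      simp only [List.flatten_cons, C_append, List.length_cons]
      rw [h w (by simp), ih (fun x hx => h x (by simp [hx]))]
      push_cast; ring

lemma flatten_prefix_bound (ws : List (List ℕ)) (h : ∀ w ∈ ws, Good w) :
    ∀ j < ws.flatten.length, C (ws.flatten.take j) ≤ (ws.length : ℤ) - 1 := by
  induction ws with
  | nil => simp
  | cons w t ih =>
      intro j hj
      simp only [List.flatten_cons, List.length_append] at hj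
      simp only [List.flatten_cons, List.length_cons]
      have htnn : (0:ℤ) ≤ (t.length : ℤ) := by positivity
      rcases lt_trichotomy j w.length with hlt | heq | hgt
      · rw [List.take_append_of_le_length hlt.le]
        have h0 := (h w (by simp)).2 j hlt
        push_cast; linarith
      · subst heq
        rw [List.take_append_of_le_length le_rfl, List.take_length]
        have h1 := (h w (by simp)).1
        have htne : t ≠ [] := by
          intro hh; subst hh; simp at hj
        have ht1 : 1 ≤ t.length := List.length_pos_iff.mpr htne
        have : (1:ℤ) ≤ (t.length:ℤ) := by exact_mod_cast ht1
        push_cast; linarith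
      · obtain ⟨i, rfl⟩ : ∃ i, j = w.length + i := ⟨j - w.length, by omega⟩
        rw [List.take_length_add_append, C_append]
        have hi : i < t.flatten.length := by omega
        have h1 := (h w (by simp)).1
        have h2 := ih (fun x hx => h x (by simp [hx])) i hi
        push_cast; linarith

lemma wf_good (w : List ℕ) (hw : IsWF w) : Good w := by
  induction hw with
  | node d ws hlen h ih =>
      have hall : ∀ x ∈ ws, Good x := ih
      have hC1 : ∀ x ∈ ws, C x = 1 := fun x hx => (hall x hx).1
      have hfl : C ws.flatten = (ws.length : ℤ) := C_flatten ws hC1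
      constructor
      · rw [C_cons, hfl, hlen]; ring
      · intro k hk
        match k with
        | 0 => simp [C_nil]
        | k + 1 =>
            rw [List.take_succ_cons, C_cons]
            simp only [List.length_cons] at hk
            have := flatten_prefix_bound ws hall k (by omega)
            rw [hlen] at this
            linarith

lemma C_take_succ_le (r : List ℕ) (i : ℕ) :
    C (r.take (i + 1)) ≤ C (r.take i) + 1 := by
  rw [List.take_succ]
  cases hg : r[i]? with
  | none => simp [C_append, C_nil]
  | some a =>
      simp only [Option.toList_some]
      rw [C_append]
      have : C [a] = 1 - a := by simp [C]
      have ha : (0:ℤ) ≤ (a:ℤ) := by positivity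
      linarith

lemma split : ∀ n : ℕ, ∀ r : List ℕ, r.length ≤ n → ∀ d : ℕ, C r = (d : ℤ) →
    (∀ k < r.length, C (r.take k) ≤ (d : ℤ) - 1) →
    ∃ ws : List (List ℕ), ws.length = d ∧ ws.flatten = r ∧ ∀ w ∈ ws, IsWF w := by
  intro n
  induction n with
  | zero =>
      intro r hr d hCr _
      have hre : r = [] := List.length_eq_zero_iff.mp (by omega)
      subst hre
      have hd : d = 0 := by
        have : (d:ℤ) = 0 := by rw [← hCr]; rfl
        exact_mod_cast this
      exact ⟨[], by simp [hd], rfl, by simp⟩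
  | succ n ih =>
      intro r hr d hCr hpre
      rcases Nat.eq_zero_or_pos d with hd | hd
      · subst hd
        have hre : r = [] := by
          by_contra hne
          have hlen : 0 < r.length := List.length_pos_iff.mpr hne
          have := hpre 0 hlen
          simp only [List.take_zero, C_nil] at this
          norm_num at this
        subst hre
        exact ⟨[], rfl, rfl, by simp⟩
      · classical
        have hex : ∃ j, 1 ≤ C (r.take j) := by
          refine ⟨r.length, ?_⟩
          rw [List.take_length, hCr]; exact_mod_cast hd
        set j := Nat.find hex with hjdef
        have hj1 : 1 ≤ C (r.take j) := Nat.find_spec hex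
        have hmin : ∀ i < j, C (r.take i) ≤ 0 := by
          intro i hi
          have := Nat.find_min hex hi
          omega
        have hjle : j ≤ r.length := by
          apply Nat.find_le
          rw [List.take_length, hCr]; exact_mod_cast hd
        have hjpos : 1 ≤ j := by
          rcases Nat.eq_zero_or_pos j with h0 | h1
          · exfalso; rw [h0] at hj1; simp [C_nil] at hj1
          · exact h1
        have hCj : C (r.take j) = 1 := by
          obtain ⟨i, hji⟩ : ∃ i, j = i + 1 := ⟨j - 1, by omega⟩
          have h1 := C_take_succ_le r i
          have h2 := hmin i (by omega)
          rw [hji] at hj1 ⊢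
          omega
        -- decompose the first block
        obtain ⟨d₁, r₁, hw⟩ : ∃ d₁ r₁, r.take j = d₁ :: r₁ := by
          cases h : r.take j with
          | nil =>
              exfalso
              have : (r.take j).length = j := by
                rw [List.length_take]; omega
              rw [h] at this; simp at this; omega
          | cons a l => exact ⟨a, l, rfl⟩
        have hlen1 : r₁.length = j - 1 := by
          have : (r.take j).length = j := by rw [List.length_take]; omega
          rw [hw] at this; simp at this; omega
        have hCr₁ : C r₁ = (d₁ : ℤ) := by
          rw [hw, C_cons] at hCj; linarith
        have hpre₁ : ∀ k < r₁.length, C (r₁.take k) ≤ (d₁ : ℤ) - 1 := by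
          intro k hk
          have hk1 : k + 1 < j := by omega
          have := hmin (k + 1) hk1
          have heq : r.take (k + 1) = d₁ :: r₁.take k := by
            have : r.take (k+1) = (r.take j).take (k+1) := by
              rw [List.take_take, min_eq_left (by omega)]
            rw [this, hw, List.take_succ_cons]
          rw [heq, C_cons] at this
          linarith
        obtain ⟨ws₁, hl₁, hf₁, hwf₁⟩ := ih r₁ (by omega) d₁ hCr₁ hpre₁
        have hW1 : IsWF (r.take j) := by
          rw [hw, ← hf₁]
          exact IsWF.node d₁ ws₁ hl₁ hwf₁
        -- the remainder
        set r' := r.drop j with hr'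
        obtain ⟨e, rfl⟩ : ∃ e, d = e + 1 := ⟨d - 1, by omega⟩
        have hCr' : C r' = (e : ℤ) := by
          have := C_append (r.take j) (r.drop j)
          rw [List.take_append_drop, hCr, hCj] at this
          push_cast at this ⊢; linarith
        have hpre' : ∀ k < r'.length, C (r'.take k) ≤ (e : ℤ) - 1 := by
          intro k hk
          have hlr' : r'.length = r.length - j := by simp [hr']
          have hjk : j + k < r.length := by omega
          have heq : r.take (j + k) = r.take j ++ r'.take k := List.take_add (l := r) (i := j) (j := k)
          have := hpre (j + k) hjk
          rw [heq, C_append, hCj] at this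
          push_cast at this ⊢; linarith
        have hlr' : r'.length ≤ n := by
          have : r'.length = r.length - j := by simp [hr']
          omega
        obtain ⟨ws', hl', hf', hwf'⟩ := ih r' hlr' e hCr' hpre'
        refine ⟨r.take j :: ws', by simp [hl'], ?_, ?_⟩
        · simp only [List.flatten_cons, hf']
          exact List.take_append_drop j r
        · intro w hwm
          rcases List.mem_cons.mp hwm with h | h
          · subst h; exact hW1
          · exact hwf' w h

lemma good_wf (w : List ℕ) (h : Good w) : IsWF w := by
  obtain ⟨h1, h2⟩ := h
  obtain ⟨d, r, rfl⟩ : ∃ d r, w = d :: r := by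
    cases w with
    | nil => exfalso; rw [C_nil] at h1; norm_num at h1
    | cons d r => exact ⟨d, r, rfl⟩
  have hCr : C r = (d : ℤ) := by rw [C_cons] at h1; linarith
  have hpre : ∀ k < r.length, C (r.take k) ≤ (d : ℤ) - 1 := by
    intro k hk
    have := h2 (k + 1) (by simpa using Nat.succ_lt_succ hk)
    rw [List.take_succ_cons, C_cons] at this
    linarith
  obtain ⟨ws, hlen, hfl, hwf⟩ := split r.length r le_rfl d hCr hpre
  rw [← hfl]
  exact IsWF.node d ws hlen hwf

lemma wf_iff_good (w : List ℕ) : IsWF w ↔ Good w :=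
  ⟨wf_good w, good_wf w⟩

-- rotation helpers
lemma C_drop (s : List ℕ) (t : ℕ) : C (s.drop t) = C s - C (s.take t) := by
  have := C_append (s.take t) (s.drop t)
  rw [List.take_append_drop] at this; linarith

lemma C_drop_take (s : List ℕ) (t j : ℕ) :
    C ((s.drop t).take j) = C (s.take (t + j)) - C (s.take t) := by
  rw [List.take_add, C_append]; ring

lemma good_rot_iff (s : List ℕ) {t : ℕ} (ht1 : 1 ≤ t) (ht2 : t ≤ s.length)
    (hC : C s = 1) :
    Good (s.drop t ++ s.take t) ↔
      ((∀ u, t ≤ u → u ≤ s.length → C (s.take u) ≤ C (s.take t)) ∧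
       (∀ i, i < t → C (s.take i) + 1 ≤ C (s.take t))) := by
  have hlrot : (s.drop t ++ s.take t).length = s.length := by
    simp; omega
  have hCrot : C (s.drop t ++ s.take t) = 1 := by
    rw [C_append, C_drop s t, hC]; ring
  have hlo : ∀ j, j ≤ s.length - t →
      C ((s.drop t ++ s.take t).take j) = C (s.take (t + j)) - C (s.take t) := by
    intro j hj
    rw [List.take_append_of_le_length (by simp; omega), C_drop_take]
  have hhi : ∀ i, i ≤ t →
      C ((s.drop t ++ s.take t).take (s.length - t + i))
        = 1 - C (s.take t) + C (s.take i) := by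
    intro i hi
    have hl : (s.drop t).length = s.length - t := by simp
    rw [← hl, List.take_length_add_append, C_append, C_drop s t, hC,
        List.take_take, min_eq_left hi]
  constructor
  · rintro ⟨-, h2⟩
    constructor
    · intro u hu1 hu2
      have hj : u - t ≤ s.length - t := by omega
      have hjlt : u - t < s.length := by omega
      have := h2 (u - t) (by omega)
      rw [hlo (u - t) hj] at this
      have hut : t + (u - t) = u := by omega
      rw [hut] at this; linarith
    · intro i hi
      have hjlt : s.length - t + i < s.length := by omega
      have := h2 (s.length - t + i) (by omega)
      rw [hhi i (by omega)] at this
      linarith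
  · rintro ⟨h1, h2⟩
    refine ⟨hCrot, ?_⟩
    intro k hk
    rw [hlrot] at hk
    rcases le_or_gt k (s.length - t) with hle | hgt
    · rw [hlo k hle]
      have := h1 (t + k) (by omega) (by omega)
      linarith
    · obtain ⟨i, rfl⟩ : ∃ i, k = s.length - t + i := ⟨k - (s.length - t), by omega⟩
      have hi : i < t := by omega
      rw [hhi i hi.le]
      have := h2 i hi
      linarith

theorem stmt_8 (s : List ℕ) (hn : 1 ≤ s.length) (hC : C s = 1) :
    ∃! k : ℕ, k < s.length ∧ IsWF (krot k s) := by
  classical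
  set n := s.length with hn'
  set P : ℕ → ℤ := fun t => C (s.take t) with hPdef
  have hP0 : P 0 = 0 := by simp [hPdef, C_nil]
  have hPn : P n = 1 := by simp [hPdef, hn', List.take_length, hC]
  have hmax : ∃ t, t ≤ n ∧ ∀ u ≤ n, P u ≤ P t := by
    obtain ⟨t, ht, h⟩ := Finset.exists_max_image (Finset.range (n + 1)) P ⟨0, by simp⟩
    refine ⟨t, by simpa using Nat.lt_succ_iff.mp (Finset.mem_range.mp ht), ?_⟩
    intro u hu
    exact h u (Finset.mem_range.mpr (by omega))
  set t := Nat.find hmax with htdef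
  obtain ⟨htle, htmax⟩ : t ≤ n ∧ ∀ u ≤ n, P u ≤ P t := Nat.find_spec hmax
  have htstrict : ∀ i < t, P i + 1 ≤ P t := by
    intro i hi
    have hnot := Nat.find_min hmax hi
    push_neg at hnot
    obtain ⟨u, hu, hPu⟩ := hnot (by omega)
    have := htmax u hu
    omega
  have ht1 : 1 ≤ t := by
    rcases Nat.eq_zero_or_pos t with h0 | h1
    · exfalso
      have := htmax n le_rfl
      rw [h0, hP0, hPn] at this
      norm_num at this
    · exact h1
  -- the good rotation parameter
  have hkrot_eq : ∀ t', 1 ≤ t' → t' ≤ n →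
      krot (n - t') s = s.drop t' ++ s.take t' := by
    intro t' h1 h2
    unfold krot
    rw [← hn']
    congr 1 <;> rw [show n - (n - t') = t' by omega]
  refine ⟨n - t, ⟨by omega, ?_⟩, ?_⟩
  · rw [hkrot_eq t ht1 htle]
    apply good_wf
    rw [good_rot_iff s ht1 htle hC]
    exact ⟨fun u hu1 hu2 => htmax u hu2, fun i hi => htstrict i hi⟩
  · rintro k' ⟨hk', hwf'⟩
    set t' := n - k' with ht'def
    have hk'eq : k' = n - t' := by omega
    have ht'1 : 1 ≤ t' := by omega
    have ht'le : t' ≤ n := by omega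
    have hgood' : Good (s.drop t' ++ s.take t') := by
      apply wf_good
      rw [← hkrot_eq t' ht'1 ht'le, ← hk'eq]
      exact hwf'
    rw [good_rot_iff s ht'1 ht'le hC] at hgood'
    obtain ⟨h1', h2'⟩ := hgood'
    have htt : t' = t := by
      rcases lt_trichotomy t' t with h | h | h
      · exfalso
        have ha := h1' t h.le htle
        have hb := htstrict t' h
        simp only [hPdef] at hb
        omega
      · exact h
      · exfalso
        have ha := htmax t' ht'le
        have hb := h2' t h
        simp only [hPdef] at ha
        omega
    omega
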